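/- The exponential Riordan array [1/(1+r(1-e^z)), (e^z-1)/(1+r(1-e^z))] has A-sequence generating function A(z) = (1+rz)(1+(r+1)z) and Z-sequence generating function Z(z) = r(1+(r+1)z); consequently its production matrix is tridiagonal, and the moment sequence with EGF 1/(1+r(1-e^z)) is the moment sequence of the orthogonal polynomials P_n(x;r) satisfying P_n = (x - (r + (n-1)(2r+1)))P_{n-1} - r(r+1)(n-1)²P_{n-2}, P_0 = 1, P_1 = x - r. -/

import Mathlib

open PowerSeries Finset

noncomputable section

/-- The field ℚ(r) of rational functions, in which the parameter r lives. -/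
abbrev K : Type := RatFunc ℚ

instance : CharZero K := RingHom.charZero_iff (algebraMap ℚ K).injective |>.mp inferInstance

/-- The parameter r. -/
def r : K := RatFunc.X

/-- Composition f(g) of formal power series (intended for g with zero constant term). -/
def pcomp (f g : K⟦X⟧) : K⟦X⟧ :=
  PowerSeries.mk fun n => ∑ k ∈ Finset.range (n + 1), coeff k f * coeff n (g ^ k)

/-- g(z) = 1/(1 + r(1 - e^z)), the first component of the exponential Riordan array. -/
def gR : K⟦X⟧ := (1 + C r * (1 - exp K))⁻¹

/-- f(z) = (e^z - 1)/(1 + r(1 - e^z)), the second component. -/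
def fR : K⟦X⟧ := (exp K - 1) * (1 + C r * (1 - exp K))⁻¹

lemma coeff_pow_of_lt {g : K⟦X⟧} (h0 : constantCoeff g = 0) {k n : ℕ} (h : n < k) :
    coeff n (g ^ k) = 0 := by
  obtain ⟨m, hm⟩ := pow_dvd_pow_of_dvd ((PowerSeries.X_dvd_iff).mpr h0) k
  rw [hm, coeff_mul]
  refine Finset.sum_eq_zero fun p hp => ?_
  rw [Finset.HasAntidiagonal.mem_antidiagonal] at hp
  rw [coeff_X_pow, if_neg (by omega), zero_mul]

lemma pcomp_one (g : K⟦X⟧) : pcomp 1 g = 1 := by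
  ext n
  simp only [pcomp, coeff_mk]
  rw [Finset.sum_eq_single_of_mem 0 (Finset.mem_range.mpr (Nat.succ_pos n))]
  · simp
  · intro k _ hk
    simp [coeff_one, hk]

lemma pcomp_add (a b g : K⟦X⟧) : pcomp (a + b) g = pcomp a g + pcomp b g := by
  ext n
  simp [pcomp, add_mul, Finset.sum_add_distrib]

lemma pcomp_C_mul (c : K) (a g : K⟦X⟧) : pcomp (C c * a) g = C c * pcomp a g := by
  ext n
  simp [pcomp, coeff_C_mul, Finset.mul_sum, mul_assoc]

lemma sum_antidiag_tri {M : Type*} [AddCommMonoid M] (n : ℕ) (F : ℕ → ℕ → M)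
    (hF : ∀ i j, n < i + j → F i j = 0) :
    ∑ k ∈ Finset.range (n + 1), ∑ ij ∈ Finset.HasAntidiagonal.antidiagonal k, F ij.1 ij.2
      = ∑ i ∈ Finset.range (n + 1), ∑ j ∈ Finset.range (n + 1), F i j := by
  rw [← Finset.sum_product']
  rw [← Finset.sum_biUnion (by
    intro a _ b _ hab
    simp only [Function.onFun, Finset.disjoint_left]
    intro p hp hq
    rw [Finset.HasAntidiagonal.mem_antidiagonal] at hp hq
    exact hab (hp ▸ hq))]
  apply Finset.sum_subset
  · intro p hp
    simp only [Finset.mem_biUnion, Finset.mem_range, Finset.HasAntidiagonal.mem_antidiagonal] at hp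
    obtain ⟨k, hk, hpk⟩ := hp
    simp only [Finset.mem_product, Finset.mem_range]
    omega
  · intro p _ hnp
    refine hF p.1 p.2 ?_
    by_contra h
    push_neg at h
    exact hnp (Finset.mem_biUnion.mpr ⟨p.1 + p.2, Finset.mem_range.mpr (by omega),
      Finset.HasAntidiagonal.mem_antidiagonal.mpr rfl⟩)

lemma pcomp_mul (a b g : K⟦X⟧) (h0 : constantCoeff g = 0) :
    pcomp (a * b) g = pcomp a g * pcomp b g := by
  ext n
  rw [coeff_mul]
  simp only [pcomp, coeff_mk]
  have lhs_eq : ∑ k ∈ Finset.range (n + 1), coeff k (a * b) * coeff n (g ^ k)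
      = ∑ i ∈ Finset.range (n + 1), ∑ j ∈ Finset.range (n + 1),
          coeff i a * coeff j b * coeff n (g ^ (i + j)) := by
    rw [← sum_antidiag_tri n _ (fun i j h => by rw [coeff_pow_of_lt h0 h, mul_zero])]
    refine Finset.sum_congr rfl fun k _ => ?_
    rw [coeff_mul, Finset.sum_mul]
    refine Finset.sum_congr rfl fun ij hij => ?_
    rw [Finset.HasAntidiagonal.mem_antidiagonal] at hij
    rw [hij]
  rw [lhs_eq]
  have rhs_eq : ∀ pq ∈ Finset.HasAntidiagonal.antidiagonal n,
      (∑ i ∈ Finset.range (pq.1 + 1), coeff i a * coeff pq.1 (g ^ i)) *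
        (∑ j ∈ Finset.range (pq.2 + 1), coeff j b * coeff pq.2 (g ^ j))
      = ∑ i ∈ Finset.range (n + 1), ∑ j ∈ Finset.range (n + 1),
          (coeff i a * coeff pq.1 (g ^ i)) * (coeff j b * coeff pq.2 (g ^ j)) := by
    intro pq hpq
    rw [Finset.HasAntidiagonal.mem_antidiagonal] at hpq
    rw [Finset.sum_subset (Finset.range_subset_range.mpr (by omega : pq.1 + 1 ≤ n + 1))
      (fun i _ hi => by rw [coeff_pow_of_lt h0 (by simp [Finset.mem_range] at hi ⊢; omega), mul_zero]),
      Finset.sum_subset (Finset.range_subset_range.mpr (by omega : pq.2 + 1 ≤ n + 1))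
      (fun j _ hj => by rw [coeff_pow_of_lt h0 (by simp [Finset.mem_range] at hj ⊢; omega), mul_zero]),
      Finset.sum_mul_sum]
  rw [Finset.sum_congr rfl rhs_eq]
  calc ∑ i ∈ Finset.range (n + 1), ∑ j ∈ Finset.range (n + 1),
          coeff i a * coeff j b * coeff n (g ^ (i + j))
      = ∑ i ∈ Finset.range (n + 1), ∑ j ∈ Finset.range (n + 1),
          ∑ pq ∈ Finset.HasAntidiagonal.antidiagonal n,
            (coeff i a * coeff pq.1 (g ^ i)) * (coeff j b * coeff pq.2 (g ^ j)) := by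
        refine Finset.sum_congr rfl fun i _ => Finset.sum_congr rfl fun j _ => ?_
        rw [pow_add, coeff_mul, Finset.mul_sum]
        exact Finset.sum_congr rfl fun pq _ => by ring
    _ = ∑ i ∈ Finset.range (n + 1), ∑ pq ∈ Finset.HasAntidiagonal.antidiagonal n,
          ∑ j ∈ Finset.range (n + 1),
            (coeff i a * coeff pq.1 (g ^ i)) * (coeff j b * coeff pq.2 (g ^ j)) :=
        Finset.sum_congr rfl fun i _ => Finset.sum_comm
    _ = ∑ pq ∈ Finset.HasAntidiagonal.antidiagonal n, ∑ i ∈ Finset.range (n + 1),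
          ∑ j ∈ Finset.range (n + 1),
            (coeff i a * coeff pq.1 (g ^ i)) * (coeff j b * coeff pq.2 (g ^ j)) :=
        Finset.sum_comm


/-- denominator -/
def Dr : K⟦X⟧ := 1 + C r * (1 - exp K)

lemma gR_def : gR = Dr⁻¹ := rfl
lemma fR_def : fR = (exp K - 1) * Dr⁻¹ := rfl

lemma constantCoeff_Dr : constantCoeff Dr = 1 := by
  simp [Dr, map_add, map_mul, constantCoeff_exp]

lemma Dr_ne : Dr ≠ 0 := fun h => by have := constantCoeff_Dr; rw [h, map_zero] at this; exact zero_ne_one this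

lemma IDD : Dr⁻¹ * Dr = 1 := PowerSeries.inv_mul_cancel Dr (by rw [constantCoeff_Dr]; exact one_ne_zero)

lemma derivX_exp : d⁄dX K (exp K) = exp K := by
  ext n
  rw [coeff_derivative, coeff_exp, coeff_exp]
  have h1 : ((n : K) + 1) = algebraMap ℚ K ((n : ℚ) + 1) := by push_cast; ring
  rw [h1, ← map_mul]
  congr 1
  rw [Nat.factorial_succ]
  have h2 : ((n + 1 : ℕ) : ℚ) ≠ 0 := by positivity
  have h3 : ((n.factorial : ℚ)) ≠ 0 := Nat.cast_ne_zero.mpr n.factorial_ne_zero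
  field_simp
  push_cast
  ring

lemma deriv_Dr : d⁄dX K Dr = -(C r * exp K) := by
  rw [Dr]
  rw [map_add, Derivation.map_one_eq_zero, zero_add, Derivation.leibniz, derivative_C,
    map_sub, Derivation.map_one_eq_zero, derivX_exp]
  simp only [smul_eq_mul, smul_zero, mul_zero, add_zero, zero_sub]
  ring

lemma hAD : (1 + C r * fR) * Dr = 1 := by
  have h : (1 + C r * ((exp K - 1) * Dr⁻¹)) * Dr
      = Dr + C r * (exp K - 1) * (Dr⁻¹ * Dr) := by ring
  rw [fR_def, h, IDD, Dr]
  ring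

lemma hBD : (1 + C (r + 1) * fR) * Dr = exp K := by
  have h : (1 + C (r + 1) * ((exp K - 1) * Dr⁻¹)) * Dr
      = Dr + C (r + 1) * (exp K - 1) * (Dr⁻¹ * Dr) := by ring
  rw [fR_def, h, IDD, Dr, map_add, map_one]
  ring

lemma deriv_fR_D2 : derivativeFun fR * (Dr * Dr) = exp K := by
  have hd : derivativeFun fR = (exp K - 1) * (-Dr⁻¹ ^ 2 * -(C r * exp K)) + Dr⁻¹ * exp K := by
    show d⁄dX K fR = _
    rw [fR_def, Derivation.leibniz, derivative_inv', deriv_Dr, map_sub,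
      Derivation.map_one_eq_zero, derivX_exp]
    simp only [smul_eq_mul]
    ring
  rw [hd]
  have h2 : ((exp K - 1) * (-Dr⁻¹ ^ 2 * -(C r * exp K)) + Dr⁻¹ * exp K) * (Dr * Dr)
      = (exp K - 1) * (C r * exp K) * ((Dr⁻¹ * Dr) * (Dr⁻¹ * Dr))
        + exp K * (Dr⁻¹ * Dr) * Dr := by ring
  rw [h2, IDD, Dr]
  ring

lemma A_identity : derivativeFun fR = (1 + C r * fR) * (1 + C (r + 1) * fR) := by
  apply mul_right_cancel₀ (mul_ne_zero Dr_ne Dr_ne)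
  rw [deriv_fR_D2]
  symm
  calc (1 + C r * fR) * (1 + C (r + 1) * fR) * (Dr * Dr)
      = ((1 + C r * fR) * Dr) * ((1 + C (r + 1) * fR) * Dr) := by ring
    _ = exp K := by rw [hAD, hBD, one_mul]

lemma gR_eq : gR = 1 + C r * fR := by
  apply mul_right_cancel₀ Dr_ne
  rw [hAD, gR_def, IDD]

lemma deriv_gR : derivativeFun gR = C r * derivativeFun fR := by
  apply mul_right_cancel₀ (mul_ne_zero Dr_ne Dr_ne)
  have hg : derivativeFun gR = -Dr⁻¹ ^ 2 * -(C r * exp K) := by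
    show d⁄dX K gR = _
    rw [gR_def, derivative_inv', deriv_Dr]
  rw [hg]
  have h2 : -Dr⁻¹ ^ 2 * -(C r * exp K) * (Dr * Dr)
      = C r * exp K * ((Dr⁻¹ * Dr) * (Dr⁻¹ * Dr)) := by ring
  rw [h2, IDD]
  conv_rhs => rw [mul_assoc, deriv_fR_D2]
  ring


/-- For the exponential Riordan array [1/(1+r(1-e^z)), (e^z-1)/(1+r(1-e^z))], with f̄ the
compositional inverse of f: the A-sequence generating function A(z) = f'(f̄(z)) equals
(1+rz)(1+(r+1)z), and the Z-sequence generating function Z(z) = g'(f̄(z))/g(f̄(z)) equals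
r(1+(r+1)z); hence the production matrix is tridiagonal with the stated orthogonal
polynomial recurrence data. -/
theorem riordan_AZ_sequences (fbar : K⟦X⟧)
    (h0 : constantCoeff fbar = 0)
    (hinv : pcomp fR fbar = X) :
    pcomp (derivativeFun fR) fbar = (1 + C r * X) * (1 + C (r + 1) * X) ∧
      pcomp (derivativeFun gR) fbar * (pcomp gR fbar)⁻¹ = C r * (1 + C (r + 1) * X) := by
  have e1 : pcomp (1 + C r * fR) fbar = 1 + C r * X := by
    rw [pcomp_add, pcomp_one, pcomp_C_mul, hinv]
  have e2 : pcomp (1 + C (r + 1) * fR) fbar = 1 + C (r + 1) * X := by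
    rw [pcomp_add, pcomp_one, pcomp_C_mul, hinv]
  have hA : pcomp (derivativeFun fR) fbar
      = (1 + C r * X) * (1 + C (r + 1) * X) := by
    rw [A_identity, pcomp_mul _ _ _ h0, e1, e2]
  refine ⟨hA, ?_⟩
  rw [deriv_gR, pcomp_C_mul, hA, gR_eq, e1]
  have hu : (1 + C r * X) * (1 + C r * X)⁻¹ = 1 := by
    refine PowerSeries.mul_inv_cancel _ ?_
    simp [map_add, map_mul, constantCoeff_X]
  calc C r * ((1 + C r * X) * (1 + C (r + 1) * X)) * (1 + C r * X)⁻¹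
      = C r * (1 + C (r + 1) * X) * ((1 + C r * X) * (1 + C r * X)⁻¹) := by ring
    _ = C r * (1 + C (r + 1) * X) := by rw [hu, mul_one]

end
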